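/- Let α ∈ [0,1] be a real number, and let G = K_{t,t,…,t} be the complete p-partite graph with p ≥ 2 parts each of size t ≥ 1, so G has N = pt vertices. Then the characteristic polynomial of A_α(G) equals (x − αt(p−1))^{p(t−1)} · (x − t(αp−1))^{p−1} · (x − t(p−1)); equivalently, the A_α-spectrum of G consists of the eigenvalue αt(p−1) with multiplicity tp − p, the eigenvalue t(αp−1) with multiplicity p−1, and the simple eigenvalue t(p−1). -/

import Mathlib

open Matrix Polynomial BigOperators

/-- The generalized adjacency matrix `A_α(G) = α·D(G) + (1−α)·A(G)`. -/
noncomputable def Aalpha {V : Type*} [Fintype V] (G : SimpleGraph V) (α : ℝ) :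
    Matrix V V ℝ :=
  letI := Classical.decEq V
  letI := Classical.decRel G.Adj
  α • Matrix.diagonal (fun v => (G.degree v : ℝ)) + (1 - α) • G.adjMatrix ℝ

/-- `μ` is an eigenvalue of the real matrix `M`. -/
def Matrix.IsEigenvalue {n : Type*} [Fintype n] (M : Matrix n n ℝ) (μ : ℝ) : Prop :=
  ∃ v : n → ℝ, v ≠ 0 ∧ M.mulVec v = μ • v

/-- The dimension of the eigenspace of a real matrix `M` for the value `μ`. -/
noncomputable def eigMult {n : Type*} [Fintype n] (M : Matrix n n ℝ) (μ : ℝ) : ℕ :=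
  letI := Classical.decEq n
  Module.finrank ℝ (Module.End.eigenspace (Matrix.toLin' M) μ)

/-- The joined union `G[G_1, …, G_n]`. -/
def joinedUnion {n : ℕ} (G : SimpleGraph (Fin n)) (V : Fin n → Type*)
    (Gs : ∀ i, SimpleGraph (V i)) : SimpleGraph (Σ i, V i) :=
  SimpleGraph.fromRel (fun x y =>
    if h : x.1 = y.1 then (Gs y.1).Adj (h ▸ x.2) y.2 else G.Adj x.1 y.1)

/-- The join `G ∇ H` of two graphs. -/
def graphJoin {V W : Type*} (G : SimpleGraph V) (H : SimpleGraph W) :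
    SimpleGraph (V ⊕ W) :=
  SimpleGraph.fromRel (fun x y =>
    match x, y with
    | Sum.inl a, Sum.inl b => G.Adj a b
    | Sum.inr a, Sum.inr b => H.Adj a b
    | _, _ => True)

/-- The disjoint union `G ∪ H` of two graphs. -/
def disjUnion {V W : Type*} (G : SimpleGraph V) (H : SimpleGraph W) :
    SimpleGraph (V ⊕ W) :=
  SimpleGraph.fromRel (fun x y =>
    match x, y with
    | Sum.inl a, Sum.inl b => G.Adj a b
    | Sum.inr a, Sum.inr b => H.Adj a b
    | _, _ => False)

/-- Degree of a vertex (classical version). -/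
noncomputable def gdegree {V : Type*} [Fintype V] (G : SimpleGraph V) (v : V) : ℕ :=
  letI := Classical.decEq V
  letI := Classical.decRel G.Adj
  G.degree v

/-- The power graph of a group. -/
def powerGraph (G : Type*) [Group G] : SimpleGraph G :=
  SimpleGraph.fromRel (fun x y => ∃ k : ℕ, 0 < k ∧ y = x ^ k)

private lemma det_ite_add_const {K : Type*} [Field K] {t : ℕ} (ht : 1 ≤ t)
    (c d : K) (hc : c ≠ 0) :
    (Matrix.of fun i j : Fin t => (if i = j then c else 0) + d).det
      = c ^ (t - 1) * (c + (t : K) * d) := by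
  have hM : (Matrix.of fun i j : Fin t => (if i = j then c else 0) + d)
      = c • (1 + Matrix.replicateCol Unit (fun _ => d / c) * Matrix.replicateRow Unit (fun _ => (1:K))) := by
    ext i j
    rcases eq_or_ne i j with rfl | h
    · simp [Matrix.one_apply, Matrix.mul_apply, Matrix.replicateCol, Matrix.replicateRow, mul_add,
        mul_div_cancel₀, hc]
    · simp [Matrix.one_apply, Matrix.mul_apply, Matrix.replicateCol, Matrix.replicateRow, mul_add, h,
        mul_div_cancel₀, hc]
  rw [hM, Matrix.det_smul, Matrix.det_one_add_replicateCol_mul_replicateRow]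
  have hct : c ^ t = c ^ (t - 1) * c := by
    conv_lhs => rw [show t = (t-1)+1 by omega]
    rw [pow_succ]
  simp only [dotProduct, Finset.sum_const, Finset.card_univ, Fintype.card_fin,
    nsmul_eq_mul, one_mul, hct]
  field_simp

private lemma deg_cmp (p t : ℕ) (v : Σ _ : Fin p, Fin t)
    [Fintype ((SimpleGraph.completeMultipartiteGraph (fun _ : Fin p => Fin t)).neighborSet v)] :
    (SimpleGraph.completeMultipartiteGraph (fun _ : Fin p => Fin t)).degree v = (p - 1) * t := by
  classical
  rw [← SimpleGraph.card_neighborSet_eq_degree]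
  have hset : (SimpleGraph.completeMultipartiteGraph (fun _ : Fin p => Fin t)).neighborSet v
      = {w : Σ _ : Fin p, Fin t | ¬ v.1 = w.1} := by
    ext w; simp [SimpleGraph.neighborSet]
  rw [Fintype.card_congr (Equiv.setCongr hset)]
  have e : {w : Σ _ : Fin p, Fin t | ¬ v.1 = w.1} ≃ {i : Fin p // ¬ v.1 = i} × Fin t :=
    { toFun := fun w => (⟨w.1.1, w.2⟩, w.1.2)
      invFun := fun x => ⟨⟨x.1.1, x.2⟩, x.1.2⟩
      left_inv := fun w => rfl
      right_inv := fun x => rfl }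
  rw [Fintype.card_congr e]
  simp [Fintype.card_subtype_compl, Fintype.card_subtype_eq]


/-- the `A_α`-characteristic polynomial of the complete `p`-partite
graph with all parts of size `t`. -/
theorem stmt_4 {α : ℝ} (hα : α ∈ Set.Icc (0 : ℝ) 1)
    (p t : ℕ) (hp : 2 ≤ p) (ht : 1 ≤ t) :
    (Aalpha (SimpleGraph.completeMultipartiteGraph (fun _ : Fin p => Fin t)) α).charpoly =
      (X - C (α * (t : ℝ) * ((p : ℝ) - 1))) ^ (p * (t - 1)) *
        (X - C ((t : ℝ) * (α * (p : ℝ) - 1))) ^ (p - 1) *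
        (X - C ((t : ℝ) * ((p : ℝ) - 1))) := by
  classical
  set K := FractionRing (Polynomial ℝ) with hK
  set φ : Polynomial ℝ →+* K := (algebraMap (Polynomial ℝ) K) with hφdef
  have hφ : Function.Injective φ := IsFractionRing.injective _ _
  apply hφ
  set a' : ℝ := α * (t:ℝ) * ((p:ℝ) - 1) with ha'
  set c : K := φ (X - C a') with hcdef
  set d : K := φ (C (1 - α)) with hddef
  set s : K := c + (t:K) * d with hsdef
  have hn : ∀ n : ℕ, (n : K) = φ (C (n:ℝ)) := by
    intro n
    rw [map_natCast (C : ℝ →+* Polynomial ℝ) n, map_natCast φ n]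
  have hc0 : c ≠ 0 := by
    rw [hcdef, map_ne_zero_iff φ hφ]
    exact X_sub_C_ne_zero a'
  have hs_eq : s = φ (X - C ((t:ℝ) * (α*(p:ℝ) - 1))) := by
    rw [hsdef, hcdef, hddef, hn t, ← _root_.map_mul φ, ← _root_.map_add φ]
    congr 1
    have hre : (t:ℝ) * (α*(p:ℝ) - 1) = a' - (t:ℝ) * (1 - α) := by rw [ha']; ring
    rw [hre, ← C_mul, C_sub]
    ring
  have hs0 : s ≠ 0 := by
    rw [hs_eq, map_ne_zero_iff φ hφ]
    exact X_sub_C_ne_zero _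
  have hs3 : s - ((p*t : ℕ) : K) * d = φ (X - C ((t:ℝ) * ((p:ℝ) - 1))) := by
    rw [hsdef, hcdef, hddef, hn t, hn (p*t), ← _root_.map_mul φ, ← _root_.map_mul φ, ← _root_.map_add φ, ← _root_.map_sub φ]
    congr 1
    have hre : (t:ℝ) * ((p:ℝ) - 1) = a' - (t:ℝ)*(1-α) + ((p*t : ℕ):ℝ) * (1-α) := by
      push_cast
      rw [ha']
      ring
    rw [hre, ← C_mul, ← C_mul, C_add, C_sub]
    ring
  -- the block-diagonal part
  set e' : Fin t × Fin p ≃ Σ _ : Fin p, Fin t :=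
    { toFun := fun x => ⟨x.2, x.1⟩
      invFun := fun x => (x.2, x.1)
      left_inv := fun _ => rfl
      right_inv := fun _ => rfl } with he'
  set Dm : Matrix (Fin t) (Fin t) K := Matrix.of (fun i j => (if i = j then c else 0) + d)
    with hDm
  set A : Matrix (Σ _ : Fin p, Fin t) (Σ _ : Fin p, Fin t) K :=
    Matrix.reindex e' e' (Matrix.blockDiagonal fun _ : Fin p => Dm) with hAdef
  have hA : ∀ v w : Σ _ : Fin p, Fin t,
      A v w = if v.1 = w.1 then ((if v.2 = w.2 then c else 0) + d) else 0 := by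
    intro v w
    simp [hAdef, Matrix.blockDiagonal_apply, he', hDm]
  -- entries of Aalpha
  have hM : ∀ v w : Σ _ : Fin p, Fin t,
      Aalpha (SimpleGraph.completeMultipartiteGraph (fun _ : Fin p => Fin t)) α v w =
        (if v = w then α * (((p-1)*t : ℕ):ℝ) else 0)
          + (if v.1 = w.1 then 0 else (1-α)) := by
    intro v w
    rcases eq_or_ne v w with rfl | hvw
    · simp [Aalpha, deg_cmp]
    · by_cases hb : v.1 = w.1
      · simp [Aalpha, Matrix.diagonal_apply_ne _ hvw, hvw, hb]
      · simp [Aalpha, Matrix.diagonal_apply_ne _ hvw, hvw, hb]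
  -- the charmatrix is A + rank-one
  have key : (charmatrix (Aalpha (SimpleGraph.completeMultipartiteGraph
        (fun _ : Fin p => Fin t)) α)).map φ
      = A + Matrix.replicateCol Unit (fun _ => -d) * Matrix.replicateRow Unit (fun _ => (1:K)) := by
    ext v w
    simp only [Matrix.map_apply, Matrix.add_apply, Matrix.mul_apply, Finset.univ_unique,
      Finset.sum_singleton, Matrix.replicateCol_apply, Matrix.replicateRow_apply, mul_one, hA]
    rcases eq_or_ne v w with rfl | hvw
    · rw [charmatrix_apply_eq, hM]
      simp only [eq_self_iff_true, if_true, ite_true]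
      have : α * (((p-1)*t : ℕ):ℝ) + 0 = a' := by
        rw [ha']
        push_cast [Nat.cast_sub (show 1 ≤ p by omega)]
        ring
      rw [this, ← hcdef]
      ring
    · rw [charmatrix_apply_ne _ _ _ hvw, hM]
      by_cases hb : v.1 = w.1
      · have hv2 : ¬ v.2 = w.2 := by
          rcases v with ⟨v1, v2⟩
          rcases w with ⟨w1, w2⟩
          dsimp only at hb ⊢
          subst hb
          intro h2
          exact hvw (by cases h2; rfl)
        simp [hvw, hb, hv2]
        ring
      · simp [hvw, hb, hddef]
  -- row sums
  have hrow : ∀ v : Σ _ : Fin p, Fin t, ∑ w, A v w = s := by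
    intro v
    calc ∑ w, A v w
        = ∑ w : Σ _ : Fin p, Fin t,
            (if v.1 = w.1 then ((if v.2 = w.2 then c else 0) + d) else 0) := by
          simp only [hA]
      _ = s := by
          rw [← Finset.univ_sigma_univ, Finset.sum_sigma]
          simp [Finset.sum_ite_eq, Finset.sum_add_distrib, Finset.card_univ, hsdef,
            mul_comm]
  set u : (Σ _ : Fin p, Fin t) → K := fun _ => -d / s with hu
  have hAu : A *ᵥ u = fun _ => -d := by
    funext v
    simp only [Matrix.mulVec, dotProduct, hu]
    rw [← Finset.sum_mul, hrow]
    rw [mul_div_assoc', mul_div_cancel_left₀ _ hs0]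
  have factor : A + Matrix.replicateCol Unit (fun _ => -d) * Matrix.replicateRow Unit (fun _ => (1:K))
      = A * (1 + Matrix.replicateCol Unit u * Matrix.replicateRow Unit (fun _ => (1:K))) := by
    rw [Matrix.mul_add, Matrix.mul_one, ← Matrix.mul_assoc, ← Matrix.replicateCol_mulVec, hAu]
  have hdetA : A.det = (c ^ (t-1) * s) ^ p := by
    rw [hAdef, Matrix.det_reindex_self, Matrix.det_blockDiagonal]
    simp [hDm, det_ite_add_const ht c d hc0, Finset.prod_const, Finset.card_univ, hsdef]
  have hdot : (fun _ : Σ _ : Fin p, Fin t => (1:K)) ⬝ᵥ u = ((p*t : ℕ) : K) * (-d / s) := by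
    simp [dotProduct, hu, Finset.card_univ, Fintype.card_sigma, mul_comm]
  rw [Matrix.charpoly, RingHom.map_det, RingHom.mapMatrix_apply, key, factor, Matrix.det_mul,
    Matrix.det_one_add_replicateCol_mul_replicateRow, hdot, hdetA]
  rw [_root_.map_mul φ, _root_.map_mul φ, map_pow φ, map_pow φ]
  rw [← hcdef, ← hs_eq, ← hs3]
  have h1 : (c^(t-1)*s)^p = c^(p*(t-1)) * (s^(p-1) * s) := by
    rw [mul_pow, ← pow_mul, Nat.mul_comm (t-1) p, ← pow_succ,
      Nat.sub_add_cancel (show 1 ≤ p by omega)]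
  rw [h1]
  have h2 : s * (1 + ((p*t : ℕ) : K) * (-d/s)) = s - ((p*t : ℕ) : K) * d := by
    rw [mul_add, mul_one, mul_left_comm, mul_div_assoc', mul_div_cancel_left₀ _ hs0]
    ring
  linear_combination c^(p*(t-1)) * s^(p-1) * h2
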